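/- If D(n) denotes the number of primitive subsets of {1,...,2n} with exactly n elements, then for all sufficiently large n, D(n) ≥ 2^{n/4 - 2} * 3^{n/12 - 2} (so D(n) grows at least like (1.303...)^n). -/

import Mathlib

open Finset

private lemma sum_pow_two_card (s : Finset ℕ) :
    ∑ A ∈ s.powerset, 2 ^ A.card = 3 ^ s.card := by
  induction s using Finset.induction_on with
  | empty => simp
  | @insert a s ha ih =>
    rw [Finset.sum_powerset_insert ha, Finset.card_insert_of_notMem ha]
    have h2 : ∀ A ∈ s.powerset, 2 ^ (insert a A).card = 2 * 2 ^ A.card := by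
      intro A hA
      rw [Finset.card_insert_of_notMem (fun h => ha (Finset.mem_powerset.1 hA h))]
      ring
    rw [Finset.sum_congr rfl h2, ih, ← Finset.mul_sum, ih]
    ring

/-- The construction: starting from (n, 2n], replace 2x by x for x ∈ X,
    6v by 3v for v ∈ A, and 4v by 2v for v ∈ B. -/
private def pcons (n : ℕ) (X A B : Finset ℕ) : Finset ℕ :=
  (Finset.Ioc n (2*n) \ (X.image (fun x => 2*x) ∪ A.image (fun v => 6*v)
      ∪ B.image (fun v => 4*v)))
    ∪ (X ∪ A.image (fun v => 3*v) ∪ B.image (fun v => 2*v))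

private lemma mem_pcons {n : ℕ} {X A B : Finset ℕ} (y : ℕ) :
    y ∈ pcons n X A B ↔
      ((n < y ∧ y ≤ 2*n ∧ (∀ x ∈ X, y ≠ 2*x) ∧ (∀ v ∈ A, y ≠ 6*v) ∧ (∀ v ∈ B, y ≠ 4*v))
        ∨ y ∈ X ∨ (∃ v ∈ A, y = 3*v) ∨ (∃ v ∈ B, y = 2*v)) := by
  simp only [pcons, Finset.mem_union, Finset.mem_sdiff, Finset.mem_Ioc, Finset.mem_image]
  constructor
  · rintro (⟨⟨h1, h2⟩, h3⟩ | ((hx | ⟨v, hv, hy⟩) | ⟨v, hv, hy⟩))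
    · push_neg at h3
      exact Or.inl ⟨h1, h2, fun x hx he => h3.1.1 x hx he.symm,
        fun v hv he => h3.1.2 v hv he.symm, fun v hv he => h3.2 v hv he.symm⟩
    · exact Or.inr (Or.inl hx)
    · exact Or.inr (Or.inr (Or.inl ⟨v, hv, hy.symm⟩))
    · exact Or.inr (Or.inr (Or.inr ⟨v, hv, hy.symm⟩))
  · rintro (⟨h1, h2, h3, h4, h5⟩ | hx | ⟨v, hv, hy⟩ | ⟨v, hv, hy⟩)
    · refine Or.inl ⟨⟨h1, h2⟩, ?_⟩
      push_neg
      exact ⟨⟨fun x hx he => h3 x hx he.symm, fun v hv he => h4 v hv he.symm⟩,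
        fun v hv he => h5 v hv he.symm⟩
    · exact Or.inr (Or.inl (Or.inl hx))
    · exact Or.inr (Or.inl (Or.inr ⟨v, hv, hy.symm⟩))
    · exact Or.inr (Or.inr ⟨v, hv, hy.symm⟩)

private lemma card_pcons {n : ℕ} {X A B : Finset ℕ}
    (fX : ∀ x ∈ X, 2*n + 1 ≤ 3*x ∧ x ≤ n)
    (fA : ∀ v ∈ A, n + 1 ≤ 4*v ∧ 3*v ≤ n)
    (fB : B ⊆ A)
    (fX3 : ∀ x ∈ X, ∀ v ∈ A, x ≠ 3*v) :
    (pcons n X A B).card = n := by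
  have h2inj : Function.Injective (fun x : ℕ => 2*x) := fun a b h => by dsimp only at h; omega
  have h3inj : Function.Injective (fun x : ℕ => 3*x) := fun a b h => by dsimp only at h; omega
  have h4inj : Function.Injective (fun x : ℕ => 4*x) := fun a b h => by dsimp only at h; omega
  have h6inj : Function.Injective (fun x : ℕ => 6*x) := fun a b h => by dsimp only at h; omega
  have hRsub : (X.image (fun x => 2*x) ∪ A.image (fun v => 6*v) ∪ B.image (fun v => 4*v))
      ⊆ Finset.Ioc n (2*n) := by
    intro y hy
    simp only [Finset.mem_union, Finset.mem_image] at hy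
    rw [Finset.mem_Ioc]
    rcases hy with (⟨x, hx, rfl⟩ | ⟨v, hv, rfl⟩) | ⟨v, hv, rfl⟩
    · have := fX x hx; omega
    · have := fA v hv; omega
    · have := fA v (fB hv); omega
  have hd1 : Disjoint (X.image (fun x => 2*x)) (A.image (fun v => 6*v)) := by
    rw [Finset.disjoint_left]
    rintro y hy1 hy2
    simp only [Finset.mem_image] at hy1 hy2
    obtain ⟨x, hx, rfl⟩ := hy1
    obtain ⟨v, hv, he⟩ := hy2
    exact fX3 x hx v hv (by omega)
  have hd2 : Disjoint (X.image (fun x => 2*x) ∪ A.image (fun v => 6*v))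
      (B.image (fun v => 4*v)) := by
    rw [Finset.disjoint_left]
    rintro y hy1 hy2
    simp only [Finset.mem_union, Finset.mem_image] at hy1 hy2
    obtain ⟨w, hw, he⟩ := hy2
    have hfw := fA w (fB hw)
    rcases hy1 with ⟨x, hx, rfl⟩ | ⟨v, hv, rfl⟩
    · have := fX x hx; omega
    · have := fA v hv; omega
  have hRcard : (X.image (fun x => 2*x) ∪ A.image (fun v => 6*v)
      ∪ B.image (fun v => 4*v)).card = X.card + A.card + B.card := by
    rw [Finset.card_union_of_disjoint hd2, Finset.card_union_of_disjoint hd1,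
      Finset.card_image_of_injective _ h2inj, Finset.card_image_of_injective _ h6inj,
      Finset.card_image_of_injective _ h4inj]
  have hd3 : Disjoint X (A.image (fun v => 3*v)) := by
    rw [Finset.disjoint_left]
    rintro y hy1 hy2
    simp only [Finset.mem_image] at hy2
    obtain ⟨v, hv, he⟩ := hy2
    exact fX3 y hy1 v hv he.symm
  have hd4 : Disjoint (X ∪ A.image (fun v => 3*v)) (B.image (fun v => 2*v)) := by
    rw [Finset.disjoint_left]
    rintro y hy1 hy2
    simp only [Finset.mem_union, Finset.mem_image] at hy1 hy2
    obtain ⟨w, hw, he⟩ := hy2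
    have hfw := fA w (fB hw)
    rcases hy1 with hx | ⟨v, hv, rfl⟩
    · have := fX y hx; omega
    · have := fA v hv; omega
  have hAddcard : (X ∪ A.image (fun v => 3*v) ∪ B.image (fun v => 2*v)).card
      = X.card + A.card + B.card := by
    rw [Finset.card_union_of_disjoint hd4, Finset.card_union_of_disjoint hd3,
      Finset.card_image_of_injective _ h3inj, Finset.card_image_of_injective _ h2inj]
  have hdisj : Disjoint
      (Finset.Ioc n (2*n) \ (X.image (fun x => 2*x) ∪ A.image (fun v => 6*v)
        ∪ B.image (fun v => 4*v)))
      (X ∪ A.image (fun v => 3*v) ∪ B.image (fun v => 2*v)) := by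
    rw [Finset.disjoint_left]
    rintro y hy1 hy2
    rw [Finset.mem_sdiff, Finset.mem_Ioc] at hy1
    simp only [Finset.mem_union, Finset.mem_image] at hy2
    rcases hy2 with (hx | ⟨v, hv, rfl⟩) | ⟨v, hv, rfl⟩
    · have := fX y hx; omega
    · have := fA v hv; omega
    · have := fA v (fB hv); omega
  have hcle : X.card + A.card + B.card ≤ n := by
    have h := Finset.card_le_card hRsub
    rw [hRcard, Nat.card_Ioc] at h
    omega
  rw [pcons, Finset.card_union_of_disjoint hdisj, Finset.card_sdiff_of_subset hRsub, Nat.card_Ioc,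
    hRcard, hAddcard]
  omega

private lemma primitive_pcons {n : ℕ} {X A B : Finset ℕ}
    (fX : ∀ x ∈ X, 2*n + 1 ≤ 3*x ∧ x ≤ n)
    (fA : ∀ v ∈ A, n + 1 ≤ 4*v ∧ 3*v ≤ n)
    (fB : B ⊆ A) :
    ∀ u ∈ pcons n X A B, ∀ v ∈ pcons n X A B, u ≠ v → ¬ u ∣ v := by
  intro u hu v hv huv hdvd
  rw [mem_pcons] at hu hv
  have hlowu : n < 2*u ∧ u ≤ 2*n := by
    rcases hu with ⟨h1, h2, _⟩ | hx | ⟨w, hw, hy⟩ | ⟨w, hw, hy⟩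
    · omega
    · have := fX u hx; omega
    · have := fA w hw; omega
    · have := fA w (fB hw); omega
  have hlowv : n < 2*v ∧ v ≤ 2*n := by
    rcases hv with ⟨h1, h2, _⟩ | hx | ⟨w, hw, hy⟩ | ⟨w, hw, hy⟩
    · omega
    · have := fX v hx; omega
    · have := fA w hw; omega
    · have := fA w (fB hw); omega
  obtain ⟨k, hk⟩ := hdvd
  have hk3 : k ≤ 3 := by
    by_contra hcon
    have h4 : u * 4 ≤ u * k := Nat.mul_le_mul_left u (by omega)
    omega
  have hk23 : v = 2*u ∨ v = 3*u := by
    interval_cases k <;> omega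
  have hu' : u ∈ X ∨ (∃ w ∈ A, u = 3*w) ∨ (∃ w ∈ B, u = 2*w) := by
    rcases hu with ⟨h1, _⟩ | h | h | h
    · omega
    · exact Or.inl h
    · exact Or.inr (Or.inl h)
    · exact Or.inr (Or.inr h)
  have hvbig : n < v := by
    rcases hu' with h | ⟨w, hw, he⟩ | ⟨w, hw, he⟩
    · have := fX u h
      rcases hk23 with h23 | h23 <;> omega
    · have := fA w hw
      rcases hk23 with h23 | h23 <;> omega
    · have := fA w (fB hw)
      rcases hk23 with h23 | h23 <;> omega
  have hv' : (∀ x ∈ X, v ≠ 2*x) ∧ (∀ w ∈ A, v ≠ 6*w) ∧ (∀ w ∈ B, v ≠ 4*w) := by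
    rcases hv with ⟨_, _, h3, h4, h5⟩ | hx | ⟨w, hw, hy⟩ | ⟨w, hw, hy⟩
    · exact ⟨h3, h4, h5⟩
    · have := fX v hx; omega
    · have := fA w hw; omega
    · have := fA w (fB hw); omega
  rcases hu' with h | ⟨w, hw, he⟩ | ⟨w, hw, he⟩
  · have hfx := fX u h
    rcases hk23 with h23 | h23
    · exact hv'.1 u h h23
    · omega
  · have hfa := fA w hw
    rcases hk23 with h23 | h23
    · exact hv'.2.1 w hw (by omega)
    · omega
  · have hfb := fA w (fB hw)
    rcases hk23 with h23 | h23
    · exact hv'.2.2 w hw (by omega)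
    · exact hv'.2.1 w (fB hw) (by omega)

private lemma main_count (n : ℕ) :
    2 ^ ((Finset.Ioc (2*n/3) n \ (Finset.Ioc (n/4) (n/3)).image (fun v => 3*v)).card) *
      3 ^ (Finset.Ioc (n/4) (n/3)).card ≤
    ((Finset.Icc 1 (2 * n)).powerset.filter
      (fun S => S.card = n ∧ ∀ u ∈ S, ∀ v ∈ S, u ≠ v → ¬ u ∣ v)).card := by
  classical
  set V : Finset ℕ := Finset.Ioc (n/4) (n/3) with hVdef
  set Hs : Finset ℕ := Finset.Ioc (2*n/3) n \ V.image (fun v => 3*v) with hHdef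
  have hV : ∀ v ∈ V, n + 1 ≤ 4*v ∧ 3*v ≤ n := by
    intro v hv
    rw [hVdef, Finset.mem_Ioc] at hv
    omega
  have hH : ∀ h ∈ Hs, 2*n + 1 ≤ 3*h ∧ h ≤ n := by
    intro h hh
    rw [hHdef, Finset.mem_sdiff, Finset.mem_Ioc] at hh
    omega
  have hH3 : ∀ h ∈ Hs, ∀ v ∈ V, h ≠ 3*v := by
    intro h hh v hv heq
    rw [hHdef, Finset.mem_sdiff] at hh
    exact hh.2 (Finset.mem_image.2 ⟨v, hv, heq.symm⟩)
  have hcard : (Hs.powerset ×ˢ (V.powerset.sigma fun A => A.powerset)).card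
      = 2 ^ Hs.card * 3 ^ V.card := by
    rw [Finset.card_product, Finset.card_powerset, Finset.card_sigma]
    congr 1
    simp only [Finset.card_powerset]
    exact sum_pow_two_card V
  rw [← hcard]
  apply Finset.card_le_card_of_injOn (fun p => pcons n p.1 p.2.1 p.2.2)
  · rintro ⟨X, A, B⟩ hp
    rw [Finset.mem_coe, Finset.mem_product, Finset.mem_powerset, Finset.mem_sigma,
      Finset.mem_powerset, Finset.mem_powerset] at hp
    obtain ⟨hX, hA, hB⟩ := hp
    have fX : ∀ x ∈ X, 2*n + 1 ≤ 3*x ∧ x ≤ n := fun x hx => hH x (hX hx)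
    have fA : ∀ v ∈ A, n + 1 ≤ 4*v ∧ 3*v ≤ n := fun v hv => hV v (hA hv)
    have fX3 : ∀ x ∈ X, ∀ v ∈ A, x ≠ 3*v := fun x hx v hv => hH3 x (hX hx) v (hA hv)
    rw [Finset.mem_coe, Finset.mem_filter, Finset.mem_powerset]
    refine ⟨?_, card_pcons fX fA hB fX3, primitive_pcons fX fA hB⟩
    intro y hy
    rw [mem_pcons] at hy
    rw [Finset.mem_Icc]
    rcases hy with ⟨h1, h2, _⟩ | hx | ⟨v, hv, hyv⟩ | ⟨v, hv, hyv⟩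
    · omega
    · have := fX y hx; omega
    · have := fA v hv; omega
    · have := fA v (hB hv); omega
  · rintro ⟨X, A, B⟩ hp ⟨X', A', B'⟩ hq heq
    simp only [Finset.coe_product, Set.mem_prod, Finset.mem_coe, Finset.mem_powerset,
      Finset.coe_sigma, Set.mem_sigma_iff, Finset.mem_coe, Finset.mem_powerset] at hp hq
    obtain ⟨hX, hA, hB⟩ := hp
    obtain ⟨hX', hA', hB'⟩ := hq
    simp only at heq
    -- generic recovery claims
    have claimX : ∀ (X₀ A₀ B₀ : Finset ℕ), X₀ ⊆ Hs → A₀ ⊆ V → B₀ ⊆ A₀ →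
        (pcons n X₀ A₀ B₀).filter (· ∈ Hs) = X₀ := by
      intro X₀ A₀ B₀ hX₀ hA₀ hB₀
      ext y
      rw [Finset.mem_filter, mem_pcons]
      constructor
      · rintro ⟨⟨h1, _⟩ | hx | ⟨v, hv, rfl⟩ | ⟨v, hv, rfl⟩, hyH⟩
        · have := hH y hyH; omega
        · exact hx
        · exact absurd rfl (hH3 _ hyH v (hA₀ hv))
        · have := hH _ hyH
          have := hV v (hA₀ (hB₀ hv))
          omega
      · intro hx
        exact ⟨Or.inr (Or.inl hx), hX₀ hx⟩
    have claimA : ∀ (X₀ A₀ B₀ : Finset ℕ), X₀ ⊆ Hs → A₀ ⊆ V → B₀ ⊆ A₀ →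
        V.filter (fun v => 3*v ∈ pcons n X₀ A₀ B₀) = A₀ := by
      intro X₀ A₀ B₀ hX₀ hA₀ hB₀
      ext v
      rw [Finset.mem_filter, mem_pcons]
      constructor
      · rintro ⟨hvV, ⟨h1, _⟩ | hx | ⟨w, hw, hvw⟩ | ⟨w, hw, hvw⟩⟩
        · have := hV v hvV; omega
        · exact absurd rfl (hH3 _ (hX₀ hx) v hvV)
        · have h1 := hV w (hA₀ hw)
          have h2 := hV v hvV
          have : v = w := by omega
          rwa [this]
        · have h1 := hV w (hA₀ (hB₀ hw))
          have h2 := hV v hvV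
          omega
      · intro hvA
        exact ⟨hA₀ hvA, Or.inr (Or.inr (Or.inl ⟨v, hvA, rfl⟩))⟩
    have claimB : ∀ (X₀ A₀ B₀ : Finset ℕ), X₀ ⊆ Hs → A₀ ⊆ V → B₀ ⊆ A₀ →
        V.filter (fun v => 2*v ∈ pcons n X₀ A₀ B₀) = B₀ := by
      intro X₀ A₀ B₀ hX₀ hA₀ hB₀
      ext v
      rw [Finset.mem_filter, mem_pcons]
      constructor
      · rintro ⟨hvV, ⟨h1, _⟩ | hx | ⟨w, hw, hvw⟩ | ⟨w, hw, hvw⟩⟩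
        · have := hV v hvV; omega
        · have h1 := hH _ (hX₀ hx)
          have := hV v hvV
          omega
        · have h1 := hV w (hA₀ hw)
          have h2 := hV v hvV
          omega
        · have h1 := hV w (hA₀ (hB₀ hw))
          have h2 := hV v hvV
          have : v = w := by omega
          rwa [this]
      · intro hvB
        exact ⟨hA₀ (hB₀ hvB), Or.inr (Or.inr (Or.inr ⟨v, hvB, rfl⟩))⟩
    have eX : X = X' := by
      rw [← claimX X A B hX hA hB, ← claimX X' A' B' hX' hA' hB']
      exact congrArg _ heq
    have eA : A = A' := by
      rw [← claimA X A B hX hA hB, ← claimA X' A' B' hX' hA' hB']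
      simp only [heq]
    have eB : B = B' := by
      rw [← claimB X A B hX hA hB, ← claimB X' A' B' hX' hA' hB']
      simp only [heq]
    subst eX; subst eA; subst eB
    rfl

theorem stmt_19 (D : ℕ → ℕ)
    (hD : ∀ n, D n = ((Finset.Icc 1 (2 * n)).powerset.filter
      (fun S => S.card = n ∧ ∀ u ∈ S, ∀ v ∈ S, u ≠ v → ¬ u ∣ v)).card) :
    ∃ N : ℕ, ∀ n : ℕ, N ≤ n →
      (2 : ℝ) ^ ((n : ℝ) / 4 - 2) * (3 : ℝ) ^ ((n : ℝ) / 12 - 2) ≤ (D n : ℝ) := by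
  refine ⟨0, fun n _ => ?_⟩
  have hmc := main_count n
  set a : ℕ := (Finset.Ioc (2*n/3) n \ (Finset.Ioc (n/4) (n/3)).image (fun v => 3*v)).card
    with hadef
  set b : ℕ := (Finset.Ioc (n/4) (n/3)).card with hbdef
  have hb : b = n/3 - n/4 := by rw [hbdef, Nat.card_Ioc]
  have hsub : (Finset.Ioc (n/4) (n/3)).image (fun v => 3*v) ⊆ Finset.Ioc (2*n/3) n := by
    intro x hx
    rw [Finset.mem_image] at hx
    obtain ⟨v, hv, hxv⟩ := hx
    rw [Finset.mem_Ioc] at hv ⊢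
    omega
  have ha : a = (n - 2*n/3) - (n/3 - n/4) := by
    rw [hadef, Finset.card_sdiff_of_subset hsub, Nat.card_Ioc,
      Finset.card_image_of_injective _ (fun x y h => by omega), Nat.card_Ioc]
  have ha4 : n ≤ 4*a + 4 := by omega
  have hb12 : n ≤ 12*b + 8 := by omega
  have h2a : (2:ℝ) ^ ((n:ℝ)/4 - 2) ≤ (2:ℝ) ^ (a:ℝ) := by
    apply Real.rpow_le_rpow_of_exponent_le one_le_two
    have : (n:ℝ) ≤ 4*a + 4 := by exact_mod_cast ha4
    linarith
  have h3b : (3:ℝ) ^ ((n:ℝ)/12 - 2) ≤ (3:ℝ) ^ (b:ℝ) := by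
    apply Real.rpow_le_rpow_of_exponent_le (by norm_num)
    have : (n:ℝ) ≤ 12*b + 8 := by exact_mod_cast hb12
    linarith
  have hfin : (2:ℝ) ^ (a:ℝ) * (3:ℝ) ^ (b:ℝ) ≤ (D n : ℝ) := by
    rw [Real.rpow_natCast, Real.rpow_natCast, hD n]
    exact_mod_cast hmc
  calc (2 : ℝ) ^ ((n : ℝ) / 4 - 2) * (3 : ℝ) ^ ((n : ℝ) / 12 - 2)
      ≤ (2:ℝ) ^ (a:ℝ) * (3:ℝ) ^ (b:ℝ) := by
        apply mul_le_mul h2a h3b (Real.rpow_nonneg (by norm_num) _)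
          (Real.rpow_nonneg (by norm_num) _)
    _ ≤ (D n : ℝ) := hfin
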